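/- arXiv:1408.6002 — 6 statements merged into one kernel-verified Lean document; each statement's English description precedes it below -/
import Mathlib

section
/- Let N be a positive integer, q a prime with q ∤ N, and γ, γ' consecutive units of Z mod N with gap g = γ' − γ. Among the q copies γ + jN (j = 0,...,q−1) of this gap in the units of Z mod qN, exactly those copies where q divides γ + jN or q divides γ' + jN fail to be a gap between consecutive units of Z mod qN, and these are at most two distinct values of j. -/
open Classical in
theorem stmt_6 (N q γ γ' : ℕ) (hN : 0 < N) (hq : q.Prime) (hqN : ¬ q ∣ N)
    (hγ1 : 1 ≤ γ) (hγ'N : γ' ≤ N)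
    (hγ : Nat.Coprime γ N) (hγ' : Nat.Coprime γ' N) (hlt : γ < γ')
    (hcons : ∀ δ, γ < δ → δ < γ' → ¬ Nat.Coprime δ N) :
    (∀ j < q,
      ((Nat.Coprime (γ + j * N) (q * N) ∧ Nat.Coprime (γ' + j * N) (q * N) ∧
          ∀ δ, γ + j * N < δ → δ < γ' + j * N → ¬ Nat.Coprime δ (q * N)) ↔
        ¬ (q ∣ γ + j * N ∨ q ∣ γ' + j * N))) ∧
    ((Finset.range q).filter (fun j => q ∣ γ + j * N ∨ q ∣ γ' + j * N)).card ≤ 2 := by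
  have hcq : ∀ x : ℕ, Nat.Coprime x q ↔ ¬ q ∣ x := by
    intro x
    rw [Nat.coprime_comm]
    exact hq.coprime_iff_not_dvd
  have hmid : ∀ j, ∀ δ, γ + j * N < δ → δ < γ' + j * N → ¬ Nat.Coprime δ (q * N) := by
    intro j δ h1 h2 hc
    have hcN : Nat.Coprime δ N := Nat.Coprime.coprime_dvd_right ⟨q, by ring⟩ hc
    have hδ : δ = (δ - j * N) + j * N := by omega
    rw [hδ] at hcN
    rw [Nat.coprime_add_mul_right_left] at hcN
    exact hcons _ (by omega) (by omega) hcN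
  constructor
  · intro j hj
    constructor
    · rintro ⟨h1, h2, _⟩
      rintro (hd | hd)
      · exact (hcq _).mp (h1.coprime_dvd_right ⟨N, rfl⟩) hd
      · exact (hcq _).mp (h2.coprime_dvd_right ⟨N, rfl⟩) hd
    · intro h
      push_neg at h
      refine ⟨?_, ?_, hmid j⟩
      · exact Nat.Coprime.mul_right ((hcq _).mpr h.1)
          (by rw [Nat.coprime_add_mul_right_left]; exact hγ)
      · exact Nat.Coprime.mul_right ((hcq _).mpr h.2)
          (by rw [Nat.coprime_add_mul_right_left]; exact hγ')
  · have key : ∀ x a b : ℕ, a < q → b < q → q ∣ x + a * N → q ∣ x + b * N → a = b := by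
      intro x a b ha hb h1 h2
      rcases le_total a b with h | h
      · have hab : a * N ≤ b * N := Nat.mul_le_mul_right _ h
        have hd : q ∣ (x + b * N) - (x + a * N) := Nat.dvd_sub h2 h1
        have heq : (x + b * N) - (x + a * N) = (b - a) * N := by
          rw [Nat.sub_mul]; omega
        rw [heq] at hd
        rcases (Nat.Prime.dvd_mul hq).mp hd with h' | h'
        · rcases Nat.eq_zero_or_pos (b - a) with h0 | h0
          · omega
          · exact absurd (Nat.le_of_dvd h0 h') (by omega)
        · exact absurd h' hqN
      · have hab : b * N ≤ a * N := Nat.mul_le_mul_right _ h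
        have hd : q ∣ (x + a * N) - (x + b * N) := Nat.dvd_sub h1 h2
        have heq : (x + a * N) - (x + b * N) = (a - b) * N := by
          rw [Nat.sub_mul]; omega
        rw [heq] at hd
        rcases (Nat.Prime.dvd_mul hq).mp hd with h' | h'
        · rcases Nat.eq_zero_or_pos (a - b) with h0 | h0
          · omega
          · exact absurd (Nat.le_of_dvd h0 h') (by omega)
        · exact absurd h' hqN
    have c1 : ((Finset.range q).filter (fun j => q ∣ γ + j * N)).card ≤ 1 := by
      apply Finset.card_le_one.mpr
      intro a ha b hb
      simp only [Finset.mem_filter, Finset.mem_range] at ha hb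
      exact key γ a b ha.1 hb.1 ha.2 hb.2
    have c2 : ((Finset.range q).filter (fun j => q ∣ γ' + j * N)).card ≤ 1 := by
      apply Finset.card_le_one.mpr
      intro a ha b hb
      simp only [Finset.mem_filter, Finset.mem_range] at ha hb
      exact key γ' a b ha.1 hb.1 ha.2 hb.2
    calc ((Finset.range q).filter (fun j => q ∣ γ + j * N ∨ q ∣ γ' + j * N)).card
        = (((Finset.range q).filter (fun j => q ∣ γ + j * N)) ∪
           ((Finset.range q).filter (fun j => q ∣ γ' + j * N))).card := by
          rw [Finset.filter_or]
      _ ≤ _ + _ := Finset.card_union_le _ _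
      _ ≤ 2 := by omega
end

section
/- The number of pairs of consecutive units of Z mod p# at distance 2 (twin generators) equals ∏_{3 ≤ q ≤ p, q prime} (q − 2). -/
open Finset

private def cnt (n : ℕ) : ℕ :=
  ((Finset.range n).filter (fun γ => Nat.Coprime γ n ∧ Nat.Coprime (γ + 2) n)).card

private lemma isUnit_prod_iff {M N : Type*} [Monoid M] [Monoid N] (x : M × N) :
    IsUnit x ↔ IsUnit x.1 ∧ IsUnit x.2 := by
  constructor
  · intro h
    exact ⟨h.map (MonoidHom.fst M N), h.map (MonoidHom.snd M N)⟩
  · rintro ⟨⟨u, hu⟩, ⟨v, hv⟩⟩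
    exact ⟨⟨(↑u, ↑v), (↑u⁻¹, ↑v⁻¹), by ext <;> simp, by ext <;> simp⟩,
      by simp [Prod.ext_iff, hu, hv]⟩

private lemma isUnit_equiv {R S : Type*} [Monoid R] [Monoid S] (e : R ≃* S) (x : R) :
    IsUnit x ↔ IsUnit (e x) := by
  constructor
  · exact fun h => h.map e
  · intro h
    have := h.map e.symm
    simpa using this

private lemma cnt_eq_zmod (n : ℕ) [NeZero n] :
    cnt n = (Finset.univ.filter (fun x : ZMod n => IsUnit x ∧ IsUnit (x + 2))).card := by
  unfold cnt
  refine Finset.card_bij' (fun γ _ => (γ : ZMod n)) (fun x _ => x.val) ?_ ?_ ?_ ?_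
  · intro γ hγ
    simp only [mem_filter, mem_range] at hγ ⊢
    obtain ⟨-, h1, h2⟩ := hγ
    refine ⟨mem_univ _, (ZMod.isUnit_iff_coprime γ n).mpr h1, ?_⟩
    have : ((γ : ZMod n) + 2) = ((γ + 2 : ℕ) : ZMod n) := by push_cast; ring
    rw [this]
    exact (ZMod.isUnit_iff_coprime (γ + 2) n).mpr h2
  · intro x hx
    simp only [mem_filter, mem_univ, true_and] at hx
    obtain ⟨h1, h2⟩ := hx
    simp only [mem_filter, mem_range]
    refine ⟨ZMod.val_lt x, ?_, ?_⟩
    · rw [← ZMod.isUnit_iff_coprime]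
      rwa [ZMod.natCast_val, ZMod.cast_id]
    · rw [← ZMod.isUnit_iff_coprime]
      push_cast
      rwa [ZMod.natCast_val, ZMod.cast_id]
  · intro γ hγ
    simp only [mem_filter, mem_range] at hγ
    exact ZMod.val_cast_of_lt hγ.1
  · intro x hx
    exact (ZMod.natCast_val x).trans (ZMod.cast_id n x)

private lemma cnt_mul (m n : ℕ) (hm : 0 < m) (hn : 0 < n) (h : m.Coprime n) :
    cnt (m * n) = cnt m * cnt n := by
  haveI : NeZero m := ⟨hm.ne'⟩
  haveI : NeZero n := ⟨hn.ne'⟩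
  haveI : NeZero (m * n) := ⟨Nat.mul_ne_zero hm.ne' hn.ne'⟩
  rw [cnt_eq_zmod, cnt_eq_zmod, cnt_eq_zmod]
  let e := ZMod.chineseRemainder h
  have key : (Finset.univ.filter (fun x : ZMod (m * n) => IsUnit x ∧ IsUnit (x + 2))).card =
      (Finset.univ.filter (fun y : ZMod m × ZMod n =>
        (IsUnit y.1 ∧ IsUnit (y.1 + 2)) ∧ (IsUnit y.2 ∧ IsUnit (y.2 + 2)))).card := by
    apply Finset.card_equiv e.toEquiv
    intro x
    simp only [mem_filter, mem_univ, true_and, RingEquiv.toEquiv_eq_coe,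
      EquivLike.coe_coe]
    have h2 : e (x + 2) = e x + 2 := by
      rw [map_add]
      congr 1
      exact map_ofNat e 2
    rw [isUnit_equiv e.toMulEquiv x, isUnit_equiv e.toMulEquiv (x + 2)]
    have he : ∀ z, e.toMulEquiv z = e z := fun z => rfl
    rw [he, he, h2, isUnit_prod_iff (e x), isUnit_prod_iff (e x + 2)]
    have : (e x + 2).1 = (e x).1 + 2 := rfl
    have h2' : (e x + 2).2 = (e x).2 + 2 := rfl
    rw [this, h2']
    tauto
  rw [key]
  have hsplit : (Finset.univ.filter (fun y : ZMod m × ZMod n =>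
      (IsUnit y.1 ∧ IsUnit (y.1 + 2)) ∧ (IsUnit y.2 ∧ IsUnit (y.2 + 2)))) =
      (Finset.univ.filter (fun a : ZMod m => IsUnit a ∧ IsUnit (a + 2))) ×ˢ
      (Finset.univ.filter (fun b : ZMod n => IsUnit b ∧ IsUnit (b + 2))) := by
    ext ⟨a, b⟩
    simp only [mem_filter, mem_univ, true_and, Finset.mem_product]
  rw [hsplit, Finset.card_product]

private lemma cnt_prime_odd (q : ℕ) (hq : q.Prime) (h3 : 3 ≤ q) : cnt q = q - 2 := by
  haveI : Fact q.Prime := ⟨hq⟩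
  rw [cnt_eq_zmod]
  have hne : (0 : ZMod q) ≠ -2 := by
    intro h
    have : ((2 : ℕ) : ZMod q) = 0 := by push_cast; linear_combination h
    rw [ZMod.natCast_eq_zero_iff] at this
    have := Nat.le_of_dvd (by norm_num) this
    omega
  have hset : (Finset.univ.filter (fun x : ZMod q => IsUnit x ∧ IsUnit (x + 2))) =
      Finset.univ \ {0, -2} := by
    ext x
    simp only [mem_filter, mem_univ, true_and, mem_sdiff, mem_insert, mem_singleton,
      isUnit_iff_ne_zero]
    constructor
    · rintro ⟨h1, h2⟩ (rfl | rfl)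
      · exact h1 rfl
      · exact h2 (by ring)
    · intro h
      exact ⟨fun hx => h (Or.inl hx), fun hx => h (Or.inr (by linear_combination hx))⟩
  rw [hset, Finset.card_sdiff_of_subset (Finset.subset_univ _)]
  have hcard2 : ({0, -2} : Finset (ZMod q)).card = 2 := by
    rw [Finset.card_insert_of_notMem (by simpa using hne), Finset.card_singleton]
  rw [hcard2, Finset.card_univ, ZMod.card]

private lemma cnt_two : cnt 2 = 1 := by decide

private lemma cnt_prod (s : Finset ℕ) (h : ∀ q ∈ s, q.Prime) :
    cnt (∏ q ∈ s, q) = ∏ q ∈ s, cnt q := by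
  induction s using Finset.induction with
  | empty =>
    show cnt 1 = 1
    decide
  | insert _ _ ha ih =>
    rename_i a s
    rw [Finset.prod_insert ha, Finset.prod_insert ha]
    have hap : a.Prime := h a (mem_insert_self a s)
    have hcop : a.Coprime (∏ q ∈ s, q) := by
      apply Nat.Coprime.prod_right
      intro q hq
      exact (Nat.coprime_primes hap (h q (mem_insert_of_mem hq))).mpr
        (fun he => ha (he ▸ hq))
    rw [cnt_mul a _ hap.pos (Finset.prod_pos fun q hq => (h q (mem_insert_of_mem hq)).pos) hcop,
      ih (fun q hq => h q (mem_insert_of_mem hq))]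

theorem stmt_7 (p : ℕ) (hp : p.Prime) (hp3 : 3 ≤ p) :
    ((Finset.Icc 1 (primorial p)).filter
        (fun γ => Nat.Coprime γ (primorial p) ∧ Nat.Coprime (γ + 2) (primorial p))).card =
      ∏ q ∈ (Finset.Icc 3 p).filter Nat.Prime, (q - 2) := by
  set N := primorial p with hN
  set S := (Finset.Icc 3 p).filter Nat.Prime with hS
  have hsplit : (Finset.range (p + 1)).filter Nat.Prime = insert 2 S := by
    ext q
    simp only [hS, mem_filter, mem_range, mem_insert, mem_Icc]
    constructor
    · rintro ⟨hq, hqp⟩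
      rcases eq_or_ne q 2 with rfl | hne
      · exact Or.inl rfl
      · exact Or.inr ⟨⟨by have := hqp.two_le; omega, by omega⟩, hqp⟩
    · rintro (rfl | ⟨⟨h1, h2⟩, h3⟩)
      · exact ⟨by omega, Nat.prime_two⟩
      · exact ⟨by omega, h3⟩
  have h2S : 2 ∉ S := by simp [hS]
  have hSprime : ∀ q ∈ insert 2 S, q.Prime := by
    intro q hq
    rcases mem_insert.mp hq with rfl | hq
    · exact Nat.prime_two
    · exact (mem_filter.mp hq).2
  have hNprod : N = ∏ q ∈ insert 2 S, q := by
    rw [hN, primorial, ← hsplit]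
  have hN2 : 2 ≤ N := by
    rw [hNprod, Finset.prod_insert h2S]
    have : 0 < ∏ q ∈ S, q := Finset.prod_pos fun q hq => (hSprime q (mem_insert_of_mem hq)).pos
    omega
  -- LHS transfer: Icc 1 N filter = range N filter
  have hIcc : ((Finset.Icc 1 N).filter
      (fun γ => Nat.Coprime γ N ∧ Nat.Coprime (γ + 2) N)).card = cnt N := by
    unfold cnt
    congr 1
    ext γ
    simp only [mem_filter, mem_Icc, mem_range]
    constructor
    · rintro ⟨⟨h1, h2⟩, hc⟩
      refine ⟨?_, hc⟩
      rcases eq_or_lt_of_le h2 with rfl | h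
      · exfalso
        have := hc.1
        rw [Nat.Coprime, Nat.gcd_self] at this
        omega
      · exact h
    · rintro ⟨h1, hc⟩
      refine ⟨⟨?_, by omega⟩, hc⟩
      rcases Nat.eq_zero_or_pos γ with rfl | h
      · exfalso
        have := hc.1
        rw [Nat.coprime_zero_left] at this
        omega
      · exact h
  rw [hIcc, hNprod, cnt_prod _ hSprime, Finset.prod_insert h2S, cnt_two, one_mul]
  apply Finset.prod_congr rfl
  intro q hq
  rw [hS, mem_filter, mem_Icc] at hq
  exact cnt_prime_odd q hq.2 hq.1.1
end

section
/- If m + 1 consecutive gaps in the cycle of gaps of Z mod p# all equal the same value g (i.e., there are m + 2 units of Z mod p# in arithmetic progression with common difference g, consecutive as units), then every prime q ≤ m + 2 with q ≤ p divides g. -/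
theorem stmt_11 (p m g γ : ℕ) (hp : p.Prime) (hg : 0 < g)
    (hunits : ∀ i ≤ m + 1, Nat.Coprime (γ + i * g) (primorial p))
    (hcons : ∀ i ≤ m, ∀ δ, γ + i * g < δ → δ < γ + (i + 1) * g →
      ¬ Nat.Coprime δ (primorial p)) :
    ∀ q, q.Prime → q ≤ m + 2 → q ≤ p → q ∣ g := by
  intro q hq hqm hqp
  by_contra hnd
  -- q divides primorial p
  have hqprim : q ∣ primorial p := by
    unfold primorial
    exact Finset.dvd_prod_of_mem _ (by
      simp [Finset.mem_filter, Finset.mem_range]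
      exact ⟨hqp, hq⟩)
  haveI : Fact q.Prime := ⟨hq⟩
  -- g is invertible mod q
  have hgu : (g : ZMod q) ≠ 0 := by
    intro h
    exact hnd ((ZMod.natCast_eq_zero_iff _ _).mp h)
  set x : ZMod q := (-γ) * (g : ZMod q)⁻¹ with hx
  set i := x.val with hi
  have hilt : i < q := ZMod.val_lt x
  have him : i ≤ m + 1 := by omega
  have hzero : ((γ + i * g : ℕ) : ZMod q) = 0 := by
    push_cast
    rw [hi, ZMod.natCast_val, ZMod.cast_id, hx]
    field_simp
    ring
  have hdvd : q ∣ γ + i * g := (ZMod.natCast_eq_zero_iff _ _).mp hzero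
  have hcop := hunits i him
  have : q ∣ Nat.gcd (γ + i * g) (primorial p) := Nat.dvd_gcd hdvd hqprim
  rw [hcop] at this
  exact hq.ne_one (Nat.eq_one_of_dvd_one this)
end

section
/- For any prime p ≥ 5, the cycle of gaps of Z mod p# contains at least two gaps equal to 2q, where q is the largest prime less than p. -/
open Finset

lemma dvd_primorial_of {r p : ℕ} (hr : r.Prime) (hrp : r ≤ p) : r ∣ primorial p :=
  Finset.dvd_prod_of_mem _ (by simp [primorial, Finset.mem_filter, Nat.lt_succ_iff, hr, hrp])

lemma le_of_dvd_primorial {r p : ℕ} (hr : r.Prime) (h : r ∣ primorial p) : r ≤ p := by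
  obtain ⟨i, hi, hdvd⟩ := hr.prime.exists_mem_finset_dvd h
  simp only [Finset.mem_filter, Finset.mem_range, Nat.lt_succ_iff] at hi
  exact ((Nat.prime_dvd_prime_iff_eq hr hi.2).mp hdvd) ▸ hi.1

lemma coprime_primorial_of (p q x : ℕ) (hp : p.Prime) (hq : q.Prime) (hqp : q < p)
    (hqmax : ∀ r, r.Prime → r < p → r ≤ q)
    (h1 : ¬ q ∣ x) (h2 : ¬ p ∣ x) (h3 : ∀ r, r.Prime → r < q → ¬ r ∣ x) :
    Nat.Coprime x (primorial p) := by
  by_contra h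
  obtain ⟨r, hr, hrx, hrP⟩ := Nat.Prime.not_coprime_iff_dvd.mp h
  have hrp := le_of_dvd_primorial hr hrP
  rcases eq_or_lt_of_le hrp with h'|h'
  · exact h2 (h' ▸ hrx)
  · rcases eq_or_lt_of_le (hqmax r hr h') with h''|h''
    · exact h1 (h'' ▸ hrx)
    · exact h3 r hr h'' hrx

lemma mid_cover (p q c : ℕ) (hp : p.Prime) (hq : q.Prime) (hq3 : 3 ≤ q) (hqp : q < p)
    (hsmall : ∀ r, r.Prime → r < q → r ∣ c) (hqc : q < c)
    (hlo : ∃ r, r.Prime ∧ r ≤ p ∧ r ∣ (c - 1)) (hhi : ∃ r, r.Prime ∧ r ≤ p ∧ r ∣ (c + 1)) :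
    ∀ δ, c - q < δ → δ < c + q → ¬ Nat.Coprime δ (primorial p) := by
  intro δ h1 h2 hco
  have key : ∃ r, r.Prime ∧ r ≤ p ∧ r ∣ δ := by
    rcases lt_trichotomy δ c with h|h|h
    · by_cases ht1 : c - δ = 1
      · obtain ⟨r, hr, hrp, hrd⟩ := hlo
        exact ⟨r, hr, hrp, by rwa [show c - 1 = δ by omega] at hrd⟩
      · set t := c - δ with htdef
        have ht2 : 2 ≤ t := by omega
        have htq : t < q := by omega
        have hr : t.minFac.Prime := Nat.minFac_prime (by omega)
        have hrt : t.minFac ∣ t := Nat.minFac_dvd t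
        have hrle : t.minFac ≤ t := Nat.minFac_le (by omega)
        have hrc : t.minFac ∣ c := hsmall _ hr (by omega)
        have : t.minFac ∣ δ := by
          have := Nat.dvd_sub hrc hrt
          rwa [show c - t = δ by omega] at this
        exact ⟨t.minFac, hr, by omega, this⟩
    · exact ⟨2, Nat.prime_two, by omega, h ▸ hsmall 2 Nat.prime_two (by omega)⟩
    · by_cases ht1 : δ - c = 1
      · obtain ⟨r, hr, hrp, hrd⟩ := hhi
        exact ⟨r, hr, hrp, by rwa [show c + 1 = δ by omega] at hrd⟩
      · set t := δ - c with htdef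
        have ht2 : 2 ≤ t := by omega
        have htq : t < q := by omega
        have hr : t.minFac.Prime := Nat.minFac_prime (by omega)
        have hrt : t.minFac ∣ t := Nat.minFac_dvd t
        have hrle : t.minFac ≤ t := Nat.minFac_le (by omega)
        have hrc : t.minFac ∣ c := hsmall _ hr (by omega)
        have : t.minFac ∣ δ := by
          have := Nat.dvd_add hrc hrt
          rwa [show c + t = δ by omega] at this
        exact ⟨t.minFac, hr, by omega, this⟩
  obtain ⟨r, hr, hrp, hrd⟩ := key
  exact (Nat.Prime.not_coprime_iff_dvd.mpr ⟨r, hr, hrd, dvd_primorial_of hr hrp⟩) hco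

lemma build (p q a b : ℕ) (hp : p.Prime) (hq : q.Prime) (hqp : q < p) (ha : a < q) (hb : b < p) :
    ∃ c, c < primorial p ∧ c % q = a ∧ c % p = b ∧ (∀ r, r.Prime → r < q → r ∣ c) := by
  have hcoqp : Nat.Coprime q p := (Nat.coprime_primes hq hp).mpr (by omega)
  have hmq : Nat.Coprime (primorial (q-1)) q := by
    rw [Nat.coprime_comm, hq.coprime_iff_not_dvd]
    intro h; have := le_of_dvd_primorial hq h; omega
  have hmp : Nat.Coprime (primorial (q-1)) p := by
    rw [Nat.coprime_comm, hp.coprime_iff_not_dvd]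
    intro h; have := le_of_dvd_primorial hp h; omega
  have hmqp : Nat.Coprime (primorial (q-1)) (q*p) := Nat.Coprime.mul_right hmq hmp
  obtain ⟨k₁, hk₁q, hk₁p⟩ := Nat.chineseRemainder hcoqp a b
  obtain ⟨c₀, hc₀m, hc₀qp⟩ := Nat.chineseRemainder hmqp 0 k₁
  have hqP : q ∣ primorial p := dvd_primorial_of hq (by omega)
  have hpP : p ∣ primorial p := dvd_primorial_of hp le_rfl
  refine ⟨c₀ % primorial p, Nat.mod_lt _ (primorial_pos p), ?_, ?_, ?_⟩
  · have h3 : c₀ % primorial p ≡ a [MOD q] :=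
      ((Nat.mod_modEq c₀ _).of_dvd hqP).trans ((hc₀qp.of_dvd (dvd_mul_right q p)).trans hk₁q)
    have h4 : (c₀ % primorial p) % q = a % q := h3
    rwa [Nat.mod_eq_of_lt ha] at h4
  · have h3 : c₀ % primorial p ≡ b [MOD p] :=
      ((Nat.mod_modEq c₀ _).of_dvd hpP).trans ((hc₀qp.of_dvd (dvd_mul_left p q)).trans hk₁p)
    have h4 : (c₀ % primorial p) % p = b % p := h3
    rwa [Nat.mod_eq_of_lt hb] at h4
  · intro r hr hrq
    have h1 : r ∣ c₀ :=
      dvd_trans (dvd_primorial_of hr (by omega)) ((Nat.modEq_zero_iff_dvd).mp hc₀m)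
    exact (Nat.dvd_mod_iff (dvd_primorial_of hr (by omega))).mpr h1
theorem stmt_12 (p q : ℕ) (hp : p.Prime) (hp5 : 5 ≤ p) (hq : q.Prime) (hqp : q < p)
    (hqmax : ∀ r, r.Prime → r < p → r ≤ q) :
    ∃ γ₁ γ₂, γ₁ ∈ Finset.Icc 1 (primorial p) ∧ γ₂ ∈ Finset.Icc 1 (primorial p) ∧ γ₁ ≠ γ₂ ∧
      (Nat.Coprime γ₁ (primorial p) ∧ Nat.Coprime (γ₁ + 2 * q) (primorial p) ∧
        ∀ δ, γ₁ < δ → δ < γ₁ + 2 * q → ¬ Nat.Coprime δ (primorial p)) ∧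
      (Nat.Coprime γ₂ (primorial p) ∧ Nat.Coprime (γ₂ + 2 * q) (primorial p) ∧
        ∀ δ, γ₂ < δ → δ < γ₂ + 2 * q → ¬ Nat.Coprime δ (primorial p)) := by
  have hq3 : 3 ≤ q := hqmax 3 (by norm_num) (by omega)
  have hqo : q % 2 = 1 := by rcases hq.eq_two_or_odd with h|h <;> omega
  have hpo : p % 2 = 1 := by rcases hp.eq_two_or_odd with h|h <;> omega
  have hq1p : q + 1 < p := by omega
  obtain ⟨c₁, hc1P, hc1q, hc1p, hsmall1⟩ := build p q 1 (p-1) hp hq hqp (by omega) (by omega)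
  obtain ⟨c₂, hc2P, hc2q, hc2p, hsmall2⟩ := build p q (q-1) 1 hp hq hqp (by omega) (by omega)
  -- positions
  have hqc1 : q < c₁ := by
    by_contra hle
    rcases eq_or_lt_of_le (by omega : c₁ ≤ q) with he|hl
    · rw [he, Nat.mod_self] at hc1q; omega
    · rw [Nat.mod_eq_of_lt hl] at hc1q
      obtain ⟨k, hk⟩ := hsmall1 2 Nat.prime_two (by omega); omega
  have hqc2 : q < c₂ := by
    by_contra hle
    rcases eq_or_lt_of_le (by omega : c₂ ≤ q) with he|hl
    · rw [he, Nat.mod_self] at hc2q; omega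
    · rw [Nat.mod_eq_of_lt hl] at hc2q
      rw [Nat.mod_eq_of_lt (by omega : c₂ < p)] at hc2p; omega
  -- divisibility facts from residues
  obtain ⟨K₁, hK₁⟩ : ∃ k, c₁ = p * k + (p-1) := ⟨c₁ / p, by rw [← hc1p]; exact (Nat.div_add_mod c₁ p).symm⟩
  obtain ⟨L₁, hL₁⟩ : ∃ k, c₁ = q * k + 1 := ⟨c₁ / q, by rw [← hc1q]; exact (Nat.div_add_mod c₁ q).symm⟩
  obtain ⟨K₂, hK₂⟩ : ∃ k, c₂ = p * k + 1 := ⟨c₂ / p, by rw [← hc2p]; exact (Nat.div_add_mod c₂ p).symm⟩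
  obtain ⟨L₂, hL₂⟩ : ∃ k, c₂ = q * k + (q-1) := ⟨c₂ / q, by rw [← hc2q]; exact (Nat.div_add_mod c₂ q).symm⟩
  have hpc1 : p ∣ c₁ + 1 := ⟨K₁ + 1, by rw [Nat.mul_succ]; omega⟩
  have hqc1m : q ∣ c₁ - 1 := ⟨L₁, by omega⟩
  have hpc2m : p ∣ c₂ - 1 := ⟨K₂, by omega⟩
  have hqc2p : q ∣ c₂ + 1 := ⟨L₂ + 1, by rw [Nat.mul_succ]; omega⟩
  have hnq1 : ¬ q ∣ c₁ := by
    intro h; obtain ⟨t, ht⟩ := h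
    have : c₁ % q = 0 := by rw [ht]; exact Nat.mul_mod_right q t
    omega
  have hnq2 : ¬ q ∣ c₂ := by
    intro h; obtain ⟨t, ht⟩ := h
    have : c₂ % q = 0 := by rw [ht]; exact Nat.mul_mod_right q t
    omega
  -- coprimality of endpoints
  have hcop1l : Nat.Coprime (c₁ - q) (primorial p) := by
    refine coprime_primorial_of p q _ hp hq hqp hqmax ?_ ?_ ?_
    · intro h
      refine hnq1 ?_
      have := Nat.dvd_add h (dvd_refl q)
      rwa [Nat.sub_add_cancel (by omega : q ≤ c₁)] at this
    · intro h
      have hd := Nat.dvd_sub hpc1 h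
      rw [show (c₁+1) - (c₁-q) = q+1 by omega] at hd
      have := Nat.eq_zero_of_dvd_of_lt hd (by omega); omega
    · intro r hr hrq h
      have hd := Nat.dvd_sub (hsmall1 r hr hrq) h
      rw [show c₁ - (c₁ - q) = q by omega] at hd
      have := (Nat.prime_dvd_prime_iff_eq hr hq).mp hd; omega
  have hcop1r : Nat.Coprime (c₁ + q) (primorial p) := by
    refine coprime_primorial_of p q _ hp hq hqp hqmax ?_ ?_ ?_
    · intro h
      refine hnq1 ?_
      have hd := Nat.dvd_sub h (dvd_refl q)
      rwa [show (c₁+q) - q = c₁ by omega] at hd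
    · intro h
      have hd := Nat.dvd_sub h hpc1
      rw [show (c₁+q) - (c₁+1) = q-1 by omega] at hd
      have := Nat.eq_zero_of_dvd_of_lt hd (by omega); omega
    · intro r hr hrq h
      have hd := Nat.dvd_sub h (hsmall1 r hr hrq)
      rw [show (c₁+q) - c₁ = q by omega] at hd
      have := (Nat.prime_dvd_prime_iff_eq hr hq).mp hd; omega
  have hcop2l : Nat.Coprime (c₂ - q) (primorial p) := by
    refine coprime_primorial_of p q _ hp hq hqp hqmax ?_ ?_ ?_
    · intro h
      refine hnq2 ?_
      have := Nat.dvd_add h (dvd_refl q)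
      rwa [Nat.sub_add_cancel (by omega : q ≤ c₂)] at this
    · intro h
      have hd := Nat.dvd_sub hpc2m h
      rw [show (c₂-1) - (c₂-q) = q-1 by omega] at hd
      have := Nat.eq_zero_of_dvd_of_lt hd (by omega); omega
    · intro r hr hrq h
      have hd := Nat.dvd_sub (hsmall2 r hr hrq) h
      rw [show c₂ - (c₂ - q) = q by omega] at hd
      have := (Nat.prime_dvd_prime_iff_eq hr hq).mp hd; omega
  have hcop2r : Nat.Coprime (c₂ + q) (primorial p) := by
    refine coprime_primorial_of p q _ hp hq hqp hqmax ?_ ?_ ?_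
    · intro h
      refine hnq2 ?_
      have hd := Nat.dvd_sub h (dvd_refl q)
      rwa [show (c₂+q) - q = c₂ by omega] at hd
    · intro h
      have hd := Nat.dvd_sub h hpc2m
      rw [show (c₂+q) - (c₂-1) = q+1 by omega] at hd
      have := Nat.eq_zero_of_dvd_of_lt hd (by omega); omega
    · intro r hr hrq h
      have hd := Nat.dvd_sub h (hsmall2 r hr hrq)
      rw [show (c₂+q) - c₂ = q by omega] at hd
      have := (Nat.prime_dvd_prime_iff_eq hr hq).mp hd; omega
  have hmid1 := mid_cover p q c₁ hp hq hq3 hqp hsmall1 hqc1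
    ⟨q, hq, by omega, hqc1m⟩ ⟨p, hp, le_rfl, hpc1⟩
  have hmid2 := mid_cover p q c₂ hp hq hq3 hqp hsmall2 hqc2
    ⟨p, hp, le_rfl, hpc2m⟩ ⟨q, hq, by omega, hqc2p⟩
  refine ⟨c₁ - q, c₂ - q, Finset.mem_Icc.mpr (by omega), Finset.mem_Icc.mpr (by omega), ?_, ?_, ?_⟩
  · intro h
    have : c₁ = c₂ := by omega
    rw [this] at hc1p; omega
  · rw [show (c₁ - q) + 2 * q = c₁ + q by omega]
    exact ⟨hcop1l, hcop1r, hmid1⟩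
  · rw [show (c₂ - q) + 2 * q = c₂ + q by omega]
    exact ⟨hcop2l, hcop2r, hmid2⟩
end

section
/- Fix J ≥ 1 and for a prime variable q let M_J(q) be the J×J upper bidiagonal matrix with diagonal entries a_j(q) = (q − j − 1)/(q − 2) for j = 1, ..., J (so a_1 = 1) and superdiagonal entries b_j(q) = j/(q − 2) in position (j, j+1). Then M_J(q) = R Λ(q) L, where Λ(q) = diag(a_1(q), ..., a_J(q)), R is the upper triangular matrix with R_{ij} = (−1)^{i+j} C(j−1, i−1) for i ≤ j, L is the upper triangular matrix with L_{ij} = C(j−1, i−1) for i ≤ j, and L·R = I. In particular, the eigenvector matrices R and L do not depend on q. -/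
open Finset

lemma alt_choose_real (n : ℕ) :
    ∑ j ∈ Finset.range (n+1), (-1:ℝ)^j * (n.choose j : ℝ) = if n = 0 then 1 else 0 := by
  have h := Int.alternating_sum_range_choose (n := n)
  have h2 : ((∑ i ∈ Finset.range (n+1), (-1:ℤ)^i * (n.choose i) : ℤ) : ℝ)
      = (((if n = 0 then 1 else 0) : ℤ) : ℝ) := by rw [h]
  push_cast at h2
  exact h2

lemma keyA (i k : ℕ) :
    ∑ j ∈ Finset.range (k+1), (-1:ℝ)^j * (j.choose i : ℝ) * (k.choose j : ℝ)
      = (-1:ℝ)^i * (if i = k then 1 else 0) := by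
  rcases le_or_gt i k with h | h
  · have hsub : Finset.Ico i (k+1) ⊆ Finset.range (k+1) := by
      intro x hx; simp only [Finset.mem_Ico] at hx; simp only [Finset.mem_range]; omega
    have hz : ∀ j ∈ Finset.range (k+1), j ∉ Finset.Ico i (k+1) →
        (-1:ℝ)^j * (j.choose i : ℝ) * (k.choose j : ℝ) = 0 := by
      intro j hj hj'
      simp only [Finset.mem_range] at hj
      simp only [Finset.mem_Ico, not_and, not_lt] at hj'
      have : j < i := by omega
      simp [Nat.choose_eq_zero_of_lt this]
    rw [← Finset.sum_subset hsub hz, Finset.sum_Ico_eq_sum_range]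
    have hki : k + 1 - i = (k - i) + 1 := by omega
    rw [hki]
    have hterm : ∀ m ∈ Finset.range ((k-i)+1),
        (-1:ℝ)^(i+m) * ((i+m).choose i : ℝ) * (k.choose (i+m) : ℝ)
          = ((-1:ℝ)^i * (k.choose i : ℝ)) * ((-1:ℝ)^m * ((k-i).choose m : ℝ)) := by
      intro m hm
      simp only [Finset.mem_range] at hm
      have h1 : i + m ≤ k := by omega
      have h2 : i ≤ i + m := Nat.le_add_right _ _
      have hc := Nat.choose_mul (n := k) h2
      simp only [Nat.add_sub_cancel_left] at hc
      have hcR : (k.choose (i+m) : ℝ) * ((i+m).choose i : ℝ)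
          = (k.choose i : ℝ) * ((k-i).choose m : ℝ) := by exact_mod_cast hc
      rw [pow_add]
      calc (-1:ℝ)^i * (-1)^m * ((i+m).choose i : ℝ) * (k.choose (i+m) : ℝ)
          = (-1:ℝ)^i * (-1)^m * ((k.choose (i+m) : ℝ) * ((i+m).choose i : ℝ)) := by ring
        _ = (-1:ℝ)^i * (-1)^m * ((k.choose i : ℝ) * ((k-i).choose m : ℝ)) := by rw [hcR]
        _ = ((-1:ℝ)^i * (k.choose i : ℝ)) * ((-1:ℝ)^m * ((k-i).choose m : ℝ)) := by ring
    rw [Finset.sum_congr rfl hterm, ← Finset.mul_sum, alt_choose_real]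
    rcases eq_or_lt_of_le h with rfl | h'
    · simp
    · have : k - i ≠ 0 := by omega
      simp [this, Nat.ne_of_lt h']
  · have hz : ∀ j ∈ Finset.range (k+1),
        (-1:ℝ)^j * (j.choose i : ℝ) * (k.choose j : ℝ) = 0 := by
      intro j hj
      simp only [Finset.mem_range] at hj
      simp [Nat.choose_eq_zero_of_lt (by omega : j < i)]
    rw [Finset.sum_congr rfl hz]
    simp [Nat.ne_of_gt h]

lemma choose_weight (j i : ℕ) :
    (j:ℝ) * (j.choose i : ℝ) = (i:ℝ) * (j.choose i : ℝ) + ((i:ℝ)+1) * (j.choose (i+1) : ℝ) := by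
  have hN : j * j.choose i = i * j.choose i + (i+1) * j.choose (i+1) := by
    rcases lt_trichotomy j i with h | rfl | h
    · simp [Nat.choose_eq_zero_of_lt h, Nat.choose_eq_zero_of_lt (by omega : j < i+1)]
    · simp [Nat.choose_eq_zero_of_lt (by omega : j < j+1)]
    · -- i < j
      obtain ⟨n, rfl⟩ : ∃ n, j = n + 1 := ⟨j - 1, by omega⟩
      have h1 := Nat.add_one_mul_choose_eq n i
      -- (n+1) * n.choose i = (n+1).choose (i+1) * (i+1)
      have h2 := Nat.choose_mul_succ_eq n i
      -- n.choose i * (n+1) = (n+1).choose i * (n+1-i)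
      have hle : i ≤ n := by omega
      have : (i+1) * (n+1).choose (i+1) = (n+1-i) * (n+1).choose i := by
        rw [Nat.mul_comm, ← h1, Nat.mul_comm (n+1), h2]; ring
      have hsplit : (n+1) * (n+1).choose i
          = i * (n+1).choose i + (n+1-i) * (n+1).choose i := by
        rw [← Nat.add_mul]; congr 1; omega
      omega
  exact_mod_cast hN

lemma keyB (i k : ℕ) :
    ∑ j ∈ Finset.range (k+1), (-1:ℝ)^j * (j.choose i : ℝ) * (j:ℝ) * (k.choose j : ℝ)
      = (-1:ℝ)^i * ((if i = k then (i:ℝ) else 0) - (if i+1 = k then (i:ℝ)+1 else 0)) := by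
  have hterm : ∀ j ∈ Finset.range (k+1),
      (-1:ℝ)^j * (j.choose i : ℝ) * (j:ℝ) * (k.choose j : ℝ)
        = (i:ℝ) * ((-1:ℝ)^j * (j.choose i : ℝ) * (k.choose j : ℝ))
          + ((i:ℝ)+1) * ((-1:ℝ)^j * (j.choose (i+1) : ℝ) * (k.choose j : ℝ)) := by
    intro j _
    have := choose_weight j i
    calc (-1:ℝ)^j * (j.choose i : ℝ) * (j:ℝ) * (k.choose j : ℝ)
        = (-1:ℝ)^j * ((j:ℝ) * (j.choose i : ℝ)) * (k.choose j : ℝ) := by ring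
      _ = (-1:ℝ)^j * ((i:ℝ) * (j.choose i : ℝ) + ((i:ℝ)+1) * (j.choose (i+1) : ℝ)) * (k.choose j : ℝ) := by rw [this]
      _ = _ := by ring
  rw [Finset.sum_congr rfl hterm, Finset.sum_add_distrib, ← Finset.mul_sum, ← Finset.mul_sum,
    keyA i k, keyA (i+1) k]
  rw [pow_succ]
  split_ifs <;> ring

theorem stmt_14 (J : ℕ) (hJ : 1 ≤ J) (q : ℕ) (hq : q.Prime) (hq2 : 2 < q) :
    let a : Fin J → ℝ := fun j => ((q : ℝ) - ((j : ℕ) : ℝ) - 2) / ((q : ℝ) - 2)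
    let M : Matrix (Fin J) (Fin J) ℝ := Matrix.of fun i j =>
      if i = j then a i
      else if (i : ℕ) + 1 = (j : ℕ) then (((i : ℕ) : ℝ) + 1) / ((q : ℝ) - 2)
      else 0
    let R : Matrix (Fin J) (Fin J) ℝ := Matrix.of fun i j =>
      if (i : ℕ) ≤ (j : ℕ) then
        (-1 : ℝ) ^ ((i : ℕ) + (j : ℕ)) * (Nat.choose (j : ℕ) (i : ℕ) : ℝ)
      else 0
    let L : Matrix (Fin J) (Fin J) ℝ := Matrix.of fun i j =>
      if (i : ℕ) ≤ (j : ℕ) then (Nat.choose (j : ℕ) (i : ℕ) : ℝ) else 0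
    M = R * Matrix.diagonal a * L ∧ L * R = 1 := by
  intro a M R L
  have hq0 : ((q:ℝ) - 2) ≠ 0 := by
    have : (2:ℝ) < (q:ℝ) := by exact_mod_cast hq2
    linarith
  have hpow : ∀ n : ℕ, (-1:ℝ)^n * (-1:ℝ)^n = 1 := by
    intro n; rw [← pow_add]; exact Even.neg_one_pow ⟨n, rfl⟩
  constructor
  · -- M = R * diagonal a * L
    ext i k
    rw [Matrix.mul_apply]
    set g : ℕ → ℝ := fun j => (-1:ℝ)^((i:ℕ)+j) * ((j.choose (i:ℕ)) : ℝ) * (((k:ℕ).choose j) : ℝ)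
            * (((q:ℝ) - (j:ℝ) - 2) / ((q:ℝ) - 2)) with hg
    have hstep : ∀ j : Fin J, (R * Matrix.diagonal a) i j * L j k = g (j : ℕ) := by
      intro j
      rw [hg]
      rw [Matrix.mul_diagonal]
      simp only [R, L, a, Matrix.of_apply]
      split_ifs with h1 h2 h2
      · ring
      · rw [Nat.choose_eq_zero_of_lt (by omega : (k:ℕ) < (j:ℕ))]; simp
      · rw [Nat.choose_eq_zero_of_lt (by omega : (j:ℕ) < (i:ℕ))]; simp
      · rw [Nat.choose_eq_zero_of_lt (by omega : (j:ℕ) < (i:ℕ))]; simp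
    rw [Finset.sum_congr rfl (fun j _ => hstep j), Fin.sum_univ_eq_sum_range g J]
    have hsub : Finset.range ((k:ℕ)+1) ⊆ Finset.range J := by
      intro x hx; simp only [Finset.mem_range] at hx ⊢; omega
    have hz : ∀ j ∈ Finset.range J, j ∉ Finset.range ((k:ℕ)+1) → g j = 0 := by
      intro j _ hj
      simp only [Finset.mem_range, not_lt] at hj
      rw [hg]
      simp only
      rw [Nat.choose_eq_zero_of_lt (by omega : (k:ℕ) < j)]; simp
    rw [← Finset.sum_subset hsub hz]
    have hterm : ∀ j ∈ Finset.range ((k:ℕ)+1),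
        g j
        = ((-1:ℝ)^(i:ℕ) * (((q:ℝ)-2) * ((-1:ℝ)^j * ((j.choose (i:ℕ)) : ℝ) * (((k:ℕ).choose j) : ℝ))
            - ((-1:ℝ)^j * ((j.choose (i:ℕ)) : ℝ) * (j:ℝ) * (((k:ℕ).choose j) : ℝ)))) / ((q:ℝ)-2) := by
      intro j _
      rw [hg]
      simp only
      rw [pow_add]; ring
    rw [Finset.sum_congr rfl hterm, ← Finset.sum_div, ← Finset.mul_sum, Finset.sum_sub_distrib,
      ← Finset.mul_sum, keyA (i:ℕ) (k:ℕ), keyB (i:ℕ) (k:ℕ)]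
    simp only [M, a, Matrix.of_apply]
    have hik : (i = k) ↔ ((i:ℕ) = (k:ℕ)) := ⟨fun h => by rw [h], fun h => Fin.ext h⟩
    by_cases h1 : (i:ℕ) = (k:ℕ)
    · rw [if_pos (hik.mpr h1), if_pos h1, if_pos h1, if_neg (by omega : ¬ (i:ℕ)+1 = (k:ℕ))]
      field_simp
      nlinarith [hpow (i:ℕ)]
    · rw [if_neg (fun h => h1 (hik.mp h)), if_neg h1, if_neg h1]
      by_cases h2 : (i:ℕ)+1 = (k:ℕ)
      · rw [if_pos h2, if_pos h2]
        field_simp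
        nlinarith [hpow (i:ℕ)]
      · rw [if_neg h2, if_neg h2]
        simp
  · -- L * R = 1
    ext i k
    rw [Matrix.mul_apply, Matrix.one_apply]
    set g : ℕ → ℝ := fun j => (-1:ℝ)^((k:ℕ)) * ((-1:ℝ)^j * ((j.choose (i:ℕ)) : ℝ) * (((k:ℕ).choose j) : ℝ)) with hg
    have hstep : ∀ j : Fin J, L i j * R j k = g (j : ℕ) := by
      intro j
      rw [hg]
      simp only [R, L, Matrix.of_apply]
      split_ifs with h1 h2 h2
      · rw [pow_add]; ring
      · rw [Nat.choose_eq_zero_of_lt (by omega : (k:ℕ) < (j:ℕ))]; simp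
      · rw [Nat.choose_eq_zero_of_lt (by omega : (j:ℕ) < (i:ℕ))]; simp
      · rw [Nat.choose_eq_zero_of_lt (by omega : (j:ℕ) < (i:ℕ))]; simp
    rw [Finset.sum_congr rfl (fun j _ => hstep j), Fin.sum_univ_eq_sum_range g J]
    have hsub : Finset.range ((k:ℕ)+1) ⊆ Finset.range J := by
      intro x hx; simp only [Finset.mem_range] at hx ⊢; omega
    have hz : ∀ j ∈ Finset.range J, j ∉ Finset.range ((k:ℕ)+1) → g j = 0 := by
      intro j _ hj
      simp only [Finset.mem_range, not_lt] at hj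
      rw [hg]
      simp only
      rw [Nat.choose_eq_zero_of_lt (by omega : (k:ℕ) < j)]; simp
    rw [← Finset.sum_subset hsub hz]
    simp only [hg]
    rw [← Finset.mul_sum, keyA (i:ℕ) (k:ℕ)]
    have hik : (i = k) ↔ ((i:ℕ) = (k:ℕ)) := ⟨fun h => by rw [h], fun h => Fin.ext h⟩
    by_cases h1 : (i:ℕ) = (k:ℕ)
    · rw [if_pos h1, if_pos (hik.mpr h1)]
      rw [mul_one, ← h1, hpow]
    · rw [if_neg h1, if_neg (fun h => h1 (hik.mp h))]
      ring
end

section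
/- For every even g with 0 < g < p#, the ratio of the count of γ in [1, p#] with gcd(γ, p#) = gcd(γ + g, p#) = 1 to the count with gcd(γ, p#) = gcd(γ + 2, p#) = 1 equals ∏_{2 < q ≤ p, q prime, q | g} (q − 1)/(q − 2); in particular this ratio is at least 1, with equality if and only if g has no odd prime factor ≤ p. -/
open Finset

noncomputable def locCount (m h : ℕ) : ℕ :=
  Nat.card {x : ZMod m // IsUnit x ∧ IsUnit (x + (h : ZMod m))}

lemma prod_isUnit_iff' {M N : Type*} [Monoid M] [Monoid N] {a : M} {b : N} :
    IsUnit ((a, b) : M × N) ↔ IsUnit a ∧ IsUnit b := by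
  constructor
  · intro h; exact ⟨h.map (MonoidHom.fst M N), h.map (MonoidHom.snd M N)⟩
  · rintro ⟨⟨u, rfl⟩, ⟨v, rfl⟩⟩
    exact ⟨⟨(↑u, ↑v), (↑u⁻¹, ↑v⁻¹), by ext <;> simp, by ext <;> simp⟩, rfl⟩

lemma locCount_mul (a b h : ℕ) (ha : a ≠ 0) (hb : b ≠ 0) (hab : Nat.Coprime a b) :
    locCount (a * b) h = locCount a h * locCount b h := by
  haveI : NeZero a := ⟨ha⟩
  haveI : NeZero b := ⟨hb⟩
  rw [locCount, locCount, locCount, ← Nat.card_prod]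
  apply Nat.card_congr
  refine ((ZMod.chineseRemainder hab).toEquiv.subtypeEquiv ?_).trans
    (Equiv.subtypeProdEquivProd (p := fun x : ZMod a => IsUnit x ∧ IsUnit (x + (h : ZMod a)))
      (q := fun y : ZMod b => IsUnit y ∧ IsUnit (y + (h : ZMod b))))
  intro x
  set e := ZMod.chineseRemainder hab
  have h1 : ∀ z : ZMod (a * b), IsUnit z ↔ IsUnit (e z) := by
    intro z
    constructor
    · intro hz; exact hz.map e
    · intro hz
      have := hz.map e.symm
      rwa [RingEquiv.symm_apply_apply] at this
  have h2 : e (x + (h : ZMod (a * b))) = (((e x).1 + (h : ZMod a)), ((e x).2 + (h : ZMod b))) := by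
    rw [map_add, map_natCast]
    rfl
  rw [h1 x, h1 (x + _), h2]
  rw [show (e x) = ((e x).1, (e x).2) from rfl, prod_isUnit_iff', prod_isUnit_iff']
  tauto

lemma locCount_one (h : ℕ) : locCount 1 h = 1 := by
  rw [locCount]
  have : Subsingleton {x : ZMod 1 // IsUnit x ∧ IsUnit (x + (h : ZMod 1))} := by
    infer_instance
  rw [Nat.card_eq_one_iff_unique]
  exact ⟨this, ⟨⟨0, isUnit_of_subsingleton _, isUnit_of_subsingleton _⟩⟩⟩

lemma locCount_prod (s : Finset ℕ) (h : ℕ) (hpos : ∀ a ∈ s, a ≠ 0)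
    (hcop : Set.Pairwise s Nat.Coprime) :
    locCount (∏ a ∈ s, a) h = ∏ a ∈ s, locCount a h := by
  induction s using Finset.cons_induction with
  | empty => simp [locCount_one]
  | cons a s ha ih =>
    rw [Finset.prod_cons, Finset.prod_cons, ← ih (fun x hx => hpos x (Finset.mem_cons_of_mem hx))
      (hcop.mono (fun x hx => by simp [hx]))]
    apply locCount_mul _ _ _ (hpos a (Finset.mem_cons_self a s))
    · exact Finset.prod_ne_zero_iff.2 fun x hx => hpos x (Finset.mem_cons_of_mem hx)
    · exact Nat.Coprime.prod_right fun x hx =>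
        hcop (Finset.mem_cons_self a s) (Finset.mem_cons_of_mem hx) (fun hax => ha (hax ▸ hx))

lemma locCount_prime (q h : ℕ) (hq : q.Prime) :
    locCount q h = if q ∣ h then q - 1 else q - 2 := by
  haveI : Fact q.Prime := ⟨hq⟩
  classical
  rw [locCount, Nat.card_eq_fintype_card, Fintype.card_subtype]
  by_cases hd : q ∣ h
  · have h0 : (h : ZMod q) = 0 := (ZMod.natCast_eq_zero_iff h q).2 hd
    simp only [h0, add_zero, and_self, isUnit_iff_ne_zero]
    rw [if_pos hd, Finset.filter_ne', Finset.card_erase_of_mem (Finset.mem_univ _),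
      Finset.card_univ, ZMod.card]
  · have h0 : (h : ZMod q) ≠ 0 := fun hc => hd ((ZMod.natCast_eq_zero_iff h q).1 hc)
    rw [if_neg hd]
    have hset : (Finset.univ.filter fun x : ZMod q => IsUnit x ∧ IsUnit (x + (h : ZMod q)))
        = Finset.univ \ {0, -(h : ZMod q)} := by
      ext x
      simp only [Finset.mem_filter, Finset.mem_univ, true_and, Finset.mem_sdiff,
        Finset.mem_insert, Finset.mem_singleton, isUnit_iff_ne_zero, not_or]
      constructor
      · rintro ⟨h1, h2⟩
        exact ⟨h1, fun hx => h2 (by rw [hx]; ring)⟩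
      · rintro ⟨h1, h2⟩
        refine ⟨h1, fun hx => h2 ?_⟩
        linear_combination hx
    rw [hset, Finset.card_sdiff_of_subset (Finset.subset_univ _), Finset.card_univ, ZMod.card,
      Finset.card_pair (fun hc : (0 : ZMod q) = -(h : ZMod q) => h0 (neg_eq_zero.mp hc.symm))]

lemma count_eq_locCount (m h : ℕ) (hm : 1 < m) :
    ((Finset.Icc 1 m).filter
      (fun γ => Nat.Coprime γ m ∧ Nat.Coprime (γ + h) m)).card = locCount m h := by
  haveI : NeZero m := ⟨by omega⟩
  haveI : Nontrivial (ZMod m) := ZMod.nontrivial_iff.2 (by omega)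
  classical
  rw [locCount, Nat.card_eq_fintype_card, Fintype.card_subtype]
  refine Finset.card_nbij' (i := fun γ : ℕ => ((γ : ZMod m))) (j := fun x : ZMod m => x.val) ?_ ?_ ?_ ?_
  · intro γ hγ
    simp only [Finset.mem_coe, Finset.mem_filter] at hγ ⊢
    refine ⟨Finset.mem_univ _, (ZMod.isUnit_iff_coprime γ m).2 hγ.2.1, ?_⟩
    have : ((γ + h : ℕ) : ZMod m) = (γ : ZMod m) + (h : ZMod m) := by push_cast; ring
    rw [← this]
    exact (ZMod.isUnit_iff_coprime (γ + h) m).2 hγ.2.2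
  · intro x hx
    simp only [Finset.mem_coe, Finset.mem_filter, Finset.mem_univ, true_and] at hx
    have hxv : ((x.val : ℕ) : ZMod m) = x := ZMod.natCast_zmod_val x
    have hx0 : x ≠ 0 := by
      rintro rfl
      exact (not_isUnit_zero (M₀ := ZMod m)).elim hx.1
    simp only [Finset.mem_coe, Finset.mem_filter, Finset.mem_Icc]
    refine ⟨⟨?_, ?_⟩, ?_, ?_⟩
    · have : x.val ≠ 0 := fun hc => hx0 (by rw [← hxv, hc, Nat.cast_zero])
      omega
    · exact le_of_lt (lt_of_lt_of_le (ZMod.val_lt x) le_rfl)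
    · exact (ZMod.isUnit_iff_coprime x.val m).1 (by rw [hxv]; exact hx.1)
    · refine (ZMod.isUnit_iff_coprime (x.val + h) m).1 ?_
      have : ((x.val + h : ℕ) : ZMod m) = x + (h : ZMod m) := by push_cast [hxv]; ring
      rw [this]; exact hx.2
  · intro γ hγ
    simp only [Finset.mem_coe, Finset.mem_filter, Finset.mem_Icc] at hγ
    have hne : γ ≠ m := by
      rintro rfl
      have := hγ.2.1
      rw [Nat.coprime_self] at this
      omega
    exact ZMod.val_cast_of_lt (by omega)
  · intro x hx
    exact ZMod.natCast_zmod_val x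

lemma primorial_eq_prod (p : ℕ) :
    primorial p = ∏ q ∈ (Finset.range (p + 1)).filter Nat.Prime, q := rfl

lemma primes_split (p : ℕ) (hp3 : 3 ≤ p) :
    (Finset.range (p + 1)).filter Nat.Prime
      = insert 2 ((Finset.Icc 3 p).filter Nat.Prime) := by
  ext q
  simp only [Finset.mem_filter, Finset.mem_range, Finset.mem_insert, Finset.mem_Icc,
    Nat.lt_succ_iff]
  constructor
  · rintro ⟨hq, hprime⟩
    by_cases h2 : q = 2
    · exact Or.inl h2
    · exact Or.inr ⟨⟨by have := hprime.two_le; omega, hq⟩, hprime⟩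
  · rintro (rfl | ⟨⟨h3, hq⟩, hprime⟩)
    · exact ⟨by omega, Nat.prime_two⟩
    · exact ⟨hq, hprime⟩

lemma two_not_mem (p : ℕ) : 2 ∉ (Finset.Icc 3 p).filter Nat.Prime := by
  simp [Finset.mem_Icc]

lemma count_formula (p h : ℕ) (hp3 : 3 ≤ p) (hh : 2 ∣ h) :
    ((Finset.Icc 1 (primorial p)).filter
      (fun γ => Nat.Coprime γ (primorial p) ∧ Nat.Coprime (γ + h) (primorial p))).card
      = ∏ q ∈ (Finset.Icc 3 p).filter Nat.Prime, (if q ∣ h then q - 1 else q - 2) := by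
  have h2mem : 2 ∈ (Finset.range (p + 1)).filter Nat.Prime := by
    simp only [Finset.mem_filter, Finset.mem_range]
    exact ⟨by omega, Nat.prime_two⟩
  have hm : 1 < primorial p := by
    have h2dvd : 2 ∣ primorial p := by
      rw [primorial_eq_prod]
      exact Finset.dvd_prod_of_mem _ h2mem
    have := primorial_pos p
    omega
  rw [count_eq_locCount _ _ hm, primorial_eq_prod,
    locCount_prod _ _ (fun a ha => (Finset.mem_filter.1 ha).2.pos.ne')
      (fun a ha b hb hab => (Nat.coprime_primes (Finset.mem_filter.1 ha).2
        (Finset.mem_filter.1 hb).2).2 hab)]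
  rw [primes_split p hp3, Finset.prod_insert (two_not_mem p)]
  rw [locCount_prime 2 h Nat.prime_two, if_pos hh]
  rw [show (2 : ℕ) - 1 = 1 from rfl, one_mul]
  exact Finset.prod_congr rfl fun q hq =>
    locCount_prime q h (Finset.mem_filter.1 hq).2

theorem stmt_19 (p g : ℕ) (hp : p.Prime) (hp3 : 3 ≤ p) (heven : Even g) (hg : 0 < g)
    (hlt : g < primorial p) :
    let Ng : ℕ → ℕ := fun h => ((Finset.Icc 1 (primorial p)).filter
        (fun γ => Nat.Coprime γ (primorial p) ∧ Nat.Coprime (γ + h) (primorial p))).card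
    ((Ng g : ℝ) / (Ng 2 : ℝ) =
        ∏ q ∈ (Finset.Icc 3 p).filter (fun q => q.Prime ∧ q ∣ g),
          ((q : ℝ) - 1) / ((q : ℝ) - 2)) ∧
    1 ≤ (Ng g : ℝ) / (Ng 2 : ℝ) ∧
    ((Ng g : ℝ) / (Ng 2 : ℝ) = 1 ↔ ∀ q, q.Prime → Odd q → q ≤ p → ¬ q ∣ g) := by
  intro Ng
  classical
  set S : Finset ℕ := (Finset.Icc 3 p).filter Nat.Prime with hS
  have hq3 : ∀ q ∈ S, 3 ≤ q ∧ q ≤ p ∧ q.Prime := by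
    intro q hq
    simp only [hS, Finset.mem_filter, Finset.mem_Icc] at hq
    exact ⟨hq.1.1, hq.1.2, hq.2⟩
  have hgR : (Ng g : ℝ) = ∏ q ∈ S, (if q ∣ g then (q : ℝ) - 1 else (q : ℝ) - 2) := by
    rw [show Ng g = ∏ q ∈ S, (if q ∣ g then q - 1 else q - 2) from
      count_formula p g hp3 heven.two_dvd]
    push_cast [Nat.cast_prod]
    refine Finset.prod_congr rfl fun q hq => ?_
    have h3 := (hq3 q hq).1
    split_ifs <;> rw [Nat.cast_sub (by omega)] <;> norm_num
  have h2R : (Ng 2 : ℝ) = ∏ q ∈ S, ((q : ℝ) - 2) := by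
    rw [show Ng 2 = ∏ q ∈ S, (if q ∣ 2 then q - 1 else q - 2) from
      count_formula p 2 hp3 dvd_rfl]
    push_cast [Nat.cast_prod]
    refine Finset.prod_congr rfl fun q hq => ?_
    have h3 := (hq3 q hq).1
    rw [if_neg (fun hdvd => by have := Nat.le_of_dvd (by norm_num) hdvd; omega),
      Nat.cast_sub (by omega)]
    norm_num
  have hfacpos : ∀ q ∈ S, (0 : ℝ) < (q : ℝ) - 2 := by
    intro q hq
    have h3 := (hq3 q hq).1
    have : (3 : ℝ) ≤ (q : ℝ) := by exact_mod_cast h3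
    linarith
  have h2pos : (0 : ℝ) < (Ng 2 : ℝ) := by
    rw [h2R]; exact Finset.prod_pos hfacpos
  have hratio : (Ng g : ℝ) / (Ng 2 : ℝ)
      = ∏ q ∈ (Finset.Icc 3 p).filter (fun q => q.Prime ∧ q ∣ g),
          ((q : ℝ) - 1) / ((q : ℝ) - 2) := by
    rw [hgR, h2R, ← Finset.prod_div_distrib]
    have : ∀ q ∈ S, (if q ∣ g then (q : ℝ) - 1 else (q : ℝ) - 2) / ((q : ℝ) - 2)
        = if q ∣ g then ((q : ℝ) - 1) / ((q : ℝ) - 2) else 1 := by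
      intro q hq
      split_ifs with h
      · rfl
      · exact div_self (hfacpos q hq).ne'
    rw [Finset.prod_congr rfl this, ← Finset.prod_filter]
    congr 1
    rw [hS, Finset.filter_filter]
  refine ⟨hratio, ?_, ?_⟩
  · rw [hratio]
    calc (1 : ℝ) = ∏ _q ∈ (Finset.Icc 3 p).filter (fun q => q.Prime ∧ q ∣ g), 1 := by
          rw [Finset.prod_const_one]
      _ ≤ _ := by
          apply Finset.prod_le_prod (fun _ _ => zero_le_one)
          intro q hq
          simp only [Finset.mem_filter, Finset.mem_Icc] at hq
          rw [le_div_iff₀ (by push_cast; linarith [hq.1.1, (show (3:ℝ) ≤ q by exact_mod_cast hq.1.1)])]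
          push_cast
          linarith [(show (3:ℝ) ≤ q by exact_mod_cast hq.1.1)]
  · rw [hratio]
    constructor
    · intro h1 q hq hodd hqp hdvd
      have hq3' : 3 ≤ q := by
        have h2 := hq.two_le
        rcases Nat.lt_or_ge q 3 with h | h
        · interval_cases q
          · exact absurd hodd (by decide)
        · exact h
      have hmem : q ∈ (Finset.Icc 3 p).filter (fun q => q.Prime ∧ q ∣ g) := by
        simp only [Finset.mem_filter, Finset.mem_Icc]
        exact ⟨⟨hq3', hqp⟩, hq, hdvd⟩
      have hlt1 : (1 : ℝ) < ∏ q ∈ (Finset.Icc 3 p).filter (fun q => q.Prime ∧ q ∣ g),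
          ((q : ℝ) - 1) / ((q : ℝ) - 2) := by
        have := Finset.prod_lt_prod_of_nonempty (f := fun _ : ℕ => (1 : ℝ))
          (g := fun q : ℕ => ((q : ℝ) - 1) / ((q : ℝ) - 2))
          (fun _ _ => zero_lt_one) ?_ ⟨q, hmem⟩
        · rwa [Finset.prod_const_one] at this
        · intro i hi
          simp only [Finset.mem_filter, Finset.mem_Icc] at hi
          have h3i : (3 : ℝ) ≤ (i : ℝ) := by exact_mod_cast hi.1.1
          show (1 : ℝ) < ((i : ℝ) - 1) / ((i : ℝ) - 2)
          rw [lt_div_iff₀ (by linarith)]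
          linarith
      rw [h1] at hlt1
      exact absurd hlt1 (lt_irrefl 1)
    · intro hnone
      have : (Finset.Icc 3 p).filter (fun q => q.Prime ∧ q ∣ g) = ∅ := by
        rw [Finset.filter_eq_empty_iff]
        intro q hq ⟨hqp, hqd⟩
        simp only [Finset.mem_Icc] at hq
        exact hnone q hqp (hqp.odd_of_ne_two (by omega)) hq.2 hqd
      rw [this, Finset.prod_empty]
end
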